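/- There exists a computable functional unit H for ℕ such that every computable method operation M on ℕ is a derived method operation of H. -/

import Mathlib

/-- Primitive instructions: plain basic `f.m`, positive test `+f.m`, negative test `-f.m`
(method names are natural numbers, there is a single focus `f`), forward jump `#l`,
backward jump `\l`, and the positive/negative termination instructions `!t` / `!f`. -/
inductive Instr : Type where
  | basic (m : ℕ)
  | postest (m : ℕ)
  | negtest (m : ℕ)
  | fjump (l : ℕ)
  | bjump (l : ℕ)
  | haltT
  | haltF
deriving DecidableEq

/-- A functional unit for a state space `S`: a finite, functional set of
(method name, method operation) pairs, where a method operation is a total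
function `S → Bool × S`. -/
structure FU (S : Type*) where
  carrier : Set (ℕ × (S → Bool × S))
  finite : carrier.Finite
  functional : ∀ {m : ℕ} {M M' : S → Bool × S},
    (m, M) ∈ carrier → (m, M') ∈ carrier → M = M'

/-- The interface of a functional unit: the set of method names occurring in it. -/
def FU.iface {S : Type*} (H : FU S) : Set ℕ := {m | ∃ M, (m, M) ∈ H.carrier}

/-- The method operation named `m` in `H` (an arbitrary fixed value if `m ∉ I(H)`). -/
noncomputable def FU.op {S : Type*} (H : FU S) (m : ℕ) (s : S) : Bool × S :=
  letI := Classical.propDecidable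
  if h : ∃ M, (m, M) ∈ H.carrier then h.choose s else (true, s)

/-- The restriction `⟨I, H⟩` of a functional unit to a set `I` of method names. -/
def FU.restrict {S : Type*} (H : FU S) (I : Set ℕ) : FU S where
  carrier := {p ∈ H.carrier | p.1 ∈ I}
  finite := H.finite.subset (Set.sep_subset _ _)
  functional := fun hM hM' => H.functional hM.1 hM'.1

/-- The method names used by an instruction all belong to `I`. -/
def Instr.namesIn (I : Set ℕ) : Instr → Prop
  | .basic m => m ∈ I
  | .postest m => m ∈ I
  | .negtest m => m ∈ I
  | _ => True

/-- An instruction sequence over a set `I` of method names: a finite nonempty list of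
primitive instructions whose method names belong to `I`. -/
def InstrSeqOver (I : Set ℕ) (x : List Instr) : Prop :=
  x ≠ [] ∧ ∀ u ∈ x, u.namesIn I

/-- `Exec H x i s b s'` : execution of the instruction sequence `x` on the functional
unit `H`, from (0-based) position `i` in state `s`, terminates delivering the Boolean
value `b` with final state `s'`.  (Position `i` here corresponds to the 1-based
position `i+1`; positions outside the sequence, jumps `#0`/`\0`, and infinite
executions admit no derivation, i.e. execution does not terminate.) -/
inductive Exec {S : Type*} (H : FU S) (x : List Instr) : ℕ → S → Bool → S → Prop where
  | basic {i : ℕ} {s : S} {b : Bool} {s' : S} (m : ℕ)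
      (hu : x[i]? = some (Instr.basic m))
      (h : Exec H x (i + 1) (H.op m s).2 b s') : Exec H x i s b s'
  | posT {i : ℕ} {s : S} {b : Bool} {s' : S} (m : ℕ)
      (hu : x[i]? = some (Instr.postest m)) (hr : (H.op m s).1 = true)
      (h : Exec H x (i + 1) (H.op m s).2 b s') : Exec H x i s b s'
  | posF {i : ℕ} {s : S} {b : Bool} {s' : S} (m : ℕ)
      (hu : x[i]? = some (Instr.postest m)) (hr : (H.op m s).1 = false)
      (h : Exec H x (i + 2) (H.op m s).2 b s') : Exec H x i s b s'
  | negT {i : ℕ} {s : S} {b : Bool} {s' : S} (m : ℕ)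
      (hu : x[i]? = some (Instr.negtest m)) (hr : (H.op m s).1 = true)
      (h : Exec H x (i + 2) (H.op m s).2 b s') : Exec H x i s b s'
  | negF {i : ℕ} {s : S} {b : Bool} {s' : S} (m : ℕ)
      (hu : x[i]? = some (Instr.negtest m)) (hr : (H.op m s).1 = false)
      (h : Exec H x (i + 1) (H.op m s).2 b s') : Exec H x i s b s'
  | fjump {i : ℕ} {s : S} {b : Bool} {s' : S} (l : ℕ)
      (hu : x[i]? = some (Instr.fjump l))
      (h : Exec H x (i + l) s b s') : Exec H x i s b s'
  | bjump {i : ℕ} {s : S} {b : Bool} {s' : S} (l : ℕ)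
      (hu : x[i]? = some (Instr.bjump l)) (hl : l ≤ i)
      (h : Exec H x (i - l) s b s') : Exec H x i s b s'
  | haltT {i : ℕ} {s : S} (hu : x[i]? = some Instr.haltT) : Exec H x i s true s
  | haltF {i : ℕ} {s : S} (hu : x[i]? = some Instr.haltF) : Exec H x i s false s

/-- `M` is a derived method operation of `H`: there is an instruction sequence `x`
over `I(H)` whose produced partial method operation `⌈x⌉_H` is total and equals `M`. -/
def DerivedOp {S : Type*} (H : FU S) (M : S → Bool × S) : Prop :=
  ∃ x : List Instr, InstrSeqOver H.iface x ∧ ∀ s, Exec H x 0 s (M s).1 (M s).2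

/-- `H ≤ H'` : every method operation of `H` is a derived method operation of `H'`. -/
def FU.le {S : Type*} (H H' : FU S) : Prop :=
  ∀ m M, (m, M) ∈ H.carrier → DerivedOp H' M

/-- `H ≡ H'` : `H ≤ H'` and `H' ≤ H`. -/
def FU.equiv {S : Type*} (H H' : FU S) : Prop := FU.le H H' ∧ FU.le H' H

/-- A method operation on ℕ is computable if both its components are. -/
def ComputableMO (M : ℕ → Bool × ℕ) : Prop :=
  Computable (fun n => (M n).1) ∧ Computable (fun n => (M n).2)

/-- A functional unit for ℕ is computable if all its method operations are. -/
def ComputableFU (H : FU ℕ) : Prop :=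
  ∀ m M, (m, M) ∈ H.carrier → ComputableMO M

open Nat.Partrec (Code)
open Nat.Partrec.Code

private def opA (n : ℕ) : Bool × ℕ := (true, Nat.pair (Nat.pair n 0) 0)

private def opS (p : ℕ) : Bool × ℕ :=
  (true, Nat.pair (Nat.pair p.unpair.1.unpair.1 (p.unpair.1.unpair.2 + 1)) p.unpair.2)

private def einner (p : ℕ) : Option ℕ :=
  Code.evaln p.unpair.2 (Denumerable.ofNat Code p.unpair.1.unpair.2) p.unpair.1.unpair.1

private def opE (p : ℕ) : Bool × ℕ :=
  ((einner p).isSome, (einner p).getD (Nat.pair p.unpair.1 (p.unpair.2 + 1)))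

private def opB (v : ℕ) : Bool × ℕ := (decide (v.unpair.1 = 1), v)

private def opC (v : ℕ) : Bool × ℕ := (true, v.unpair.2)

private def ops : ℕ → (ℕ → Bool × ℕ)
  | 0 => opA
  | 1 => opS
  | 2 => opE
  | 3 => opB
  | _ => opC

private def HU : FU ℕ where
  carrier := {p | p.1 < 5 ∧ p.2 = ops p.1}
  finite := ((Set.finite_Iio 5).image (fun m => (m, ops m))).subset
    (fun p hp => ⟨p.1, hp.1, Prod.ext rfl hp.2.symm⟩)
  functional := fun h h' => h.2.trans h'.2.symm

private lemma HU_op {m : ℕ} (hm : m < 5) : HU.op m = ops m := by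
  funext s
  have hex : ∃ M, (m, M) ∈ HU.carrier := ⟨ops m, hm, rfl⟩
  have hsp := hex.choose_spec
  show (letI := Classical.propDecidable
    if h : ∃ M, (m, M) ∈ HU.carrier then h.choose s else (true, s)) = ops m s
  rw [dif_pos hex]
  exact congrFun hsp.2 s

private lemma HU_iface {m : ℕ} (hm : m < 5) : m ∈ HU.iface := ⟨ops m, hm, rfl⟩

private lemma comp_einner : Primrec einner := by
  have u : Primrec Nat.unpair := Primrec.unpair
  exact primrec_evaln.comp
    (((Primrec.snd.comp u).pair
      ((Primrec.ofNat Code).comp (Primrec.snd.comp (u.comp (Primrec.fst.comp u))))).pair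
      (Primrec.fst.comp (u.comp (Primrec.fst.comp u))))

private lemma comp_ops (m : ℕ) : ComputableMO (ops m) := by
  have u : Primrec Nat.unpair := Primrec.unpair
  match m with
  | 0 => exact ⟨Computable.const true,
      (Primrec₂.natPair.comp (Primrec₂.natPair.comp Primrec.id (Primrec.const 0))
        (Primrec.const 0)).to_comp⟩
  | 1 => exact ⟨Computable.const true,
      (Primrec₂.natPair.comp
        (Primrec₂.natPair.comp (Primrec.fst.comp (u.comp (Primrec.fst.comp u)))
          (Primrec.succ.comp (Primrec.snd.comp (u.comp (Primrec.fst.comp u)))))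
        (Primrec.snd.comp u)).to_comp⟩
  | 2 => exact ⟨(Primrec.option_isSome.comp comp_einner).to_comp,
      (Primrec.option_getD.comp comp_einner
        (Primrec₂.natPair.comp (Primrec.fst.comp u)
          (Primrec.succ.comp (Primrec.snd.comp u)))).to_comp⟩
  | 3 => exact ⟨(Primrec.eq.comp (Primrec.fst.comp u) (Primrec.const 1)).decide.to_comp,
      Computable.id⟩
  | (n+4) => exact ⟨Computable.const true, (Primrec.snd.comp u).to_comp⟩
/-- There exists a computable functional unit for ℕ of which every computable method
operation on ℕ is a derived method operation. -/
theorem exists_fu_all_computable_derived :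
    ∃ H : FU ℕ, ComputableFU H ∧
      ∀ M : ℕ → Bool × ℕ, ComputableMO M → DerivedOp H M := by
  refine ⟨HU, fun m M hm => by rw [show M = ops m from hm.2]; exact comp_ops m, ?_⟩
  rintro M ⟨hMr, hMe⟩
  -- a code for the encoded version of `M`
  set g : ℕ → ℕ := fun n => Nat.pair (cond (M n).1 1 0) (M n).2 with hgdef
  have hg : Computable g :=
    Primrec₂.natPair.to_comp.comp
      (Computable.cond hMr (Computable.const 1) (Computable.const 0)) hMe
  obtain ⟨c, hc⟩ := Code.exists_code.1 (Partrec.nat_iff.1 hg.partrec)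
  set e := Encodable.encode c with hedef
  -- the instruction sequence
  set tail : List Instr := [.postest 2, .fjump 2, .bjump 2, .negtest 3, .fjump 3,
    .basic 4, .haltT, .basic 4, .haltF] with htail
  set x : List Instr := .basic 0 :: (List.replicate e (.basic 1) ++ tail) with hx
  -- indexing facts
  have hx0 : x[0]? = some (.basic 0) := by rw [hx]; simp
  have hxS : ∀ j, j < e → x[j + 1]? = some (.basic 1) := by
    intro j hj
    rw [hx, List.getElem?_cons_succ, List.getElem?_append_left (by simpa using hj)]
    simp [hj]
  have hxT : ∀ i, x[e + 1 + i]? = tail[i]? := by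
    intro i
    have h1 : e + 1 + i = (e + i) + 1 := by omega
    rw [hx, h1, List.getElem?_cons_succ, List.getElem?_append_right (by simp)]
    simp
  -- method operation values
  have h0 : HU.op 0 = opA := HU_op (by norm_num)
  have h1 : HU.op 1 = opS := HU_op (by norm_num)
  have h2 : HU.op 2 = opE := HU_op (by norm_num)
  have h3 : HU.op 3 = opB := HU_op (by norm_num)
  have h4 : HU.op 4 = opC := HU_op (by norm_num)
  refine ⟨x, ⟨by simp [hx], ?_⟩, ?_⟩
  · -- all names in the interface
    intro u hu
    rw [hx, htail] at hu
    simp only [List.mem_cons, List.mem_append, List.mem_replicate, List.not_mem_nil, or_false] at hu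
    rcases hu with rfl | ⟨-, rfl⟩ | h
    · exact HU_iface (by norm_num)
    · exact HU_iface (by norm_num)
    · rcases h with rfl | rfl | rfl | rfl | rfl | rfl | rfl | rfl | rfl <;>
        first
          | exact HU_iface (by norm_num)
          | trivial
  intro s
  set b := (M s).1 with hb
  set mm := (M s).2 with hmm
  have hval : g s ∈ Code.eval c s := by rw [hc]; exact Part.mem_some _
  have huniq : ∀ {k : ℕ} {v' : ℕ}, v' ∈ Code.evaln k c s → v' = g s := by
    intro k v' h
    have h' := Code.evaln_sound h
    rw [hc] at h'
    exact Part.mem_some_iff.1 h'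
  obtain ⟨k₀, hk₀⟩ := Code.evaln_complete.1 hval
  have hgs : g s = Nat.pair (cond b 1 0) mm := rfl
  -- terminal part of the run
  have h6 : Exec HU x (e + 1 + 6) mm true mm := Exec.haltT (by rw [hxT 6]; rfl)
  have h8 : Exec HU x (e + 1 + 8) mm false mm := Exec.haltF (by rw [hxT 8]; rfl)
  have h5 : Exec HU x (e + 1 + 5) (g s) true mm := by
    refine Exec.basic 4 (by rw [hxT 5]; rfl) ?_
    have hst : (HU.op 4 (g s)).2 = mm := by rw [h4, hgs]; simp [opC]
    rw [hst]
    exact (show e + 1 + 6 = e + 1 + 5 + 1 by omega) ▸ h6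
  have h7 : Exec HU x (e + 1 + 7) (g s) false mm := by
    refine Exec.basic 4 (by rw [hxT 7]; rfl) ?_
    have hst : (HU.op 4 (g s)).2 = mm := by rw [h4, hgs]; simp [opC]
    rw [hst]
    exact (show e + 1 + 8 = e + 1 + 7 + 1 by omega) ▸ h8
  have hbr : Exec HU x (e + 1 + 3) (g s) b mm := by
    have hst : (HU.op 3 (g s)).2 = g s := by rw [h3]; rfl
    rcases hbv : b with _ | _
    · -- b = false
      refine Exec.negF 3 (by rw [hxT 3]; rfl) ?_ ?_
      · rw [h3, hgs, hbv]; simp [opB]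
      · rw [hst]
        refine Exec.fjump 3 ((show e+1+3+1 = e+1+4 by omega) ▸ (by rw [hxT 4]; rfl)) ?_
        exact (show e + 1 + 7 = e + 1 + 3 + 1 + 3 by omega) ▸ h7
    · -- b = true
      refine Exec.negT 3 (by rw [hxT 3]; rfl) ?_ ?_
      · rw [h3, hgs, hbv]; simp [opB]
      · rw [hst]
        exact (show e + 1 + 5 = e + 1 + 3 + 2 by omega) ▸ h5
  have h1' : Exec HU x (e + 1 + 1) (g s) b mm := by
    refine Exec.fjump 2 (by rw [hxT 1]; rfl) ?_
    exact (show e + 1 + 3 = e + 1 + 1 + 2 by omega) ▸ hbr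
  -- the evaln loop
  have hEsome : ∀ {k v'}, Code.evaln k c s = some v' →
      HU.op 2 (Nat.pair (Nat.pair s e) k) = (true, g s) := by
    intro k v' hev
    have : v' = g s := huniq (by rw [hev]; exact Option.mem_some_iff.2 rfl)
    subst this
    rw [h2]
    simp [opE, einner, Nat.unpair_pair, hedef, Denumerable.ofNat_encode, hev]
  have hEnone : ∀ {k}, Code.evaln k c s = none →
      HU.op 2 (Nat.pair (Nat.pair s e) k)
        = (false, Nat.pair (Nat.pair s e) (k + 1)) := by
    intro k hev
    rw [h2]
    simp [opE, einner, Nat.unpair_pair, hedef, Denumerable.ofNat_encode, hev]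
  have hloop : ∀ j k, k₀ ≤ k + j →
      Exec HU x (e + 1) (Nat.pair (Nat.pair s e) k) b mm := by
    intro j
    induction j with
    | zero =>
      intro k hk
      have hev : Code.evaln k c s = some (g s) :=
        Code.evaln_mono (by omega) hk₀
      refine Exec.posT 2 ((show e+1 = e+1+0 by omega) ▸ (by rw [hxT 0]; rfl))
        (by rw [hEsome hev]) ?_
      rw [hEsome hev]
      exact h1'
    | succ j ih =>
      intro k hk
      rcases hev : Code.evaln k c s with _ | v'
      · refine Exec.posF 2 ((show e+1 = e+1+0 by omega) ▸ (by rw [hxT 0]; rfl))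
          (by rw [hEnone hev]) ?_
        rw [hEnone hev]
        refine Exec.bjump 2 ((show e+1+2 = e+1+2 by omega) ▸ (by rw [hxT 2]; rfl))
          (by omega) ?_
        exact (show e + 1 = e + 1 + 2 - 2 by omega) ▸ ih (k + 1) (by omega)
      · refine Exec.posT 2 ((show e+1 = e+1+0 by omega) ▸ (by rw [hxT 0]; rfl))
          (by rw [hEsome hev]) ?_
        rw [hEsome hev]
        exact h1'
  -- the chain of increments
  have hchain : ∀ j a, a + j = e →
      Exec HU x (a + 1) (Nat.pair (Nat.pair s a) 0) b mm := by
    intro j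
    induction j with
    | zero =>
      intro a ha
      have : a = e := by omega
      subst this
      exact hloop k₀ 0 (by omega)
    | succ j ih =>
      intro a ha
      refine Exec.basic 1 (hxS a (by omega)) ?_
      have hst : (HU.op 1 (Nat.pair (Nat.pair s a) 0)).2
          = Nat.pair (Nat.pair s (a + 1)) 0 := by
        rw [h1]; simp [opS, Nat.unpair_pair]
      rw [hst]
      exact ih (a + 1) (by omega)
  -- start of the run
  refine Exec.basic 0 hx0 ?_
  have hst : (HU.op 0 s).2 = Nat.pair (Nat.pair s 0) 0 := by rw [h0]; rfl
  rw [hst]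
  exact hchain e 0 (by omega)
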